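/- Gyration identity for translated differences: for z, u, v ∈ ℝ^n where the κ-additions are defined, -(z ⊕_κ u) ⊕_κ (z ⊕_κ v) = gyr[z,u]((-u) ⊕_κ v). -/

import Mathlib

open scoped RealInnerProductSpace

noncomputable def kdenom {n : ℕ} (κ : ℝ) (x y : EuclideanSpace ℝ (Fin n)) : ℝ :=
  1 - 2 * κ * ⟪x, y⟫ + κ ^ 2 * ‖x‖ ^ 2 * ‖y‖ ^ 2

noncomputable def kadd {n : ℕ} (κ : ℝ) (x y : EuclideanSpace ℝ (Fin n)) :
    EuclideanSpace ℝ (Fin n) :=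
  (kdenom κ x y)⁻¹ •
    ((1 - 2 * κ * ⟪x, y⟫ - κ * ‖y‖ ^ 2) • x + (1 + κ * ‖x‖ ^ 2) • y)

lemma kadd_cancel {n : ℕ} (κ : ℝ) (u v : EuclideanSpace ℝ (Fin n))
    (h₄ : kdenom κ (-u) v ≠ 0) (h₅ : kdenom κ u (kadd κ (-u) v) ≠ 0) :
    kadd κ u (kadd κ (-u) v) = v := by
  simp only [kadd, kdenom, ← real_inner_self_eq_norm_sq] at *
  simp only [inner_add_left, inner_add_right, inner_smul_left, inner_smul_right,
    inner_neg_left, inner_neg_right, starRingEnd_apply, star_trivial] at *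
  have hc : (inner ℝ v u : ℝ) = inner ℝ u v := (real_inner_comm v u).symm
  simp only [hc] at *
  set p := ⟪u, v⟫ with hp
  set A := ⟪u, u⟫ with hA
  set B := ⟪v, v⟫ with hB
  have hd : (1:ℝ) + 2*κ*p + κ^2*A*B ≠ 0 := by
    intro h; apply h₄; linear_combination h
  have hD := h₅
  field_simp [hd] at hD
  match_scalars
  · field_simp [hd]
    ring
  · have hE : (1 + κ*A)^2 * (1 + 2*κ*p + κ^2*A*B) ≠ 0 := by
      intro h; apply hD; rw [div_eq_zero_iff]; left; linear_combination h
    field_simp [hd]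
    ring_nf
    rw [show 1 + κ * p * 2 + κ * A * 2 + κ ^ 2 * p * A * 4 + κ ^ 2 * A * B + κ ^ 2 * A ^ 2 +
        κ ^ 3 * p * A ^ 2 * 2 + κ ^ 3 * A ^ 2 * B * 2 + κ ^ 4 * A ^ 3 * B =
        (1 + κ*A)^2 * (1 + 2*κ*p + κ^2*A*B) by ring]
    refine Eq.trans ?_ (mul_inv_cancel₀ hE)
    ring

/-- The gyration operator. -/
noncomputable def kgyr {n : ℕ} (κ : ℝ) (u v w : EuclideanSpace ℝ (Fin n)) :
    EuclideanSpace ℝ (Fin n) :=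
  kadd κ (-(kadd κ u v)) (kadd κ u (kadd κ v w))

/-- Gyration identity for translated differences:
`-(z ⊕_κ u) ⊕_κ (z ⊕_κ v) = gyr[z,u]((-u) ⊕_κ v)`. -/
theorem kadd_translated_diff {n : ℕ} (κ : ℝ) (z u v : EuclideanSpace ℝ (Fin n))
    (h₁ : kdenom κ z u ≠ 0) (h₂ : kdenom κ z v ≠ 0)
    (h₃ : kdenom κ (-(kadd κ z u)) (kadd κ z v) ≠ 0)
    (h₄ : kdenom κ (-u) v ≠ 0)
    (h₅ : kdenom κ u (kadd κ (-u) v) ≠ 0)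
    (h₆ : kdenom κ z (kadd κ u (kadd κ (-u) v)) ≠ 0)
    (h₇ : kdenom κ (-(kadd κ z u)) (kadd κ z (kadd κ u (kadd κ (-u) v))) ≠ 0) :
    kadd κ (-(kadd κ z u)) (kadd κ z v) = kgyr κ z u (kadd κ (-u) v) := by
  rw [kgyr, kadd_cancel κ u v h₄ h₅]
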